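/- Let H be a subgroup of a group G, E a real vector space, π : G → End(E) a multiplicative map with π(1) = id, and β : G → E a cocycle for π (i.e. β(gh) = β(g) + π(g)β(h) for all g,h ∈ G) such that β(gh) = β(g) for all g ∈ G, h ∈ H, so that β induces a well-defined map on the coset space G/H. Assume the family {β(g) : gH ∈ G/H, gH ≠ H} is linearly independent in E. Let E' = span{β(g) : g ∈ G}, and let α : G → E be any map with α(1) = 0 and α(gh) = α(g) for all g ∈ G, h ∈ H. Then E' is invariant under every π(g), and there exists a unique family of linear maps D(g) : E' → E, g ∈ G, such that D(g)(β(g')) = α(gg') − α(g) − π(g)α(g') for all g' ∈ G; moreover this family satisfies the Leibniz rule D(gh) = D(g) ∘ (π(h) restricted to E') + π(g) ∘ D(h) as linear maps E' → E, for all g,h ∈ G. -/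

import Mathlib

/-- Given a cocycle `β` for a representation `π` of `G` on a real vector space `E` that is
constant on left cosets of a subgroup `H` and whose induced family over the nontrivial cosets
is linearly independent, and any `α : G → E` with `α(1) = 0` that is constant on left cosets
of `H`, the span `E'` of the image of `β` is `π`-invariant and there is a unique family of
linear maps `D(g) : E' → E` with `D(g)(β(g')) = α(gg') − α(g) − π(g)α(g')`; this family
satisfies the Leibniz rule `D(gh) = D(g)∘π(h) + π(g)∘D(h)` on `E'`. -/
theorem exists_unique_derivation_on_span {G : Type*} [Group G] (H : Subgroup G)
    {E : Type*} [AddCommGroup E] [Module ℝ E]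
    (π : G → E →ₗ[ℝ] E) (hπ1 : π 1 = LinearMap.id)
    (hπmul : ∀ g h : G, π (g * h) = (π g).comp (π h))
    (β : G → E) (hβ : ∀ g h : G, β (g * h) = β g + π g (β h))
    (hβH : ∀ g h : G, h ∈ H → β (g * h) = β g)
    (hli : LinearIndependent ℝ fun x : {x : G ⧸ H // x ≠ ((1 : G) : G ⧸ H)} =>
      Quotient.liftOn' x.1 β (fun a b hab => by
        have h1 : a⁻¹ * b ∈ H := QuotientGroup.leftRel_apply.mp hab
        have h2 := hβH a (a⁻¹ * b) h1
        rw [mul_inv_cancel_left] at h2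
        exact h2.symm))
    (α : G → E) (hα1 : α 1 = 0) (hαH : ∀ g h : G, h ∈ H → α (g * h) = α g) :
    ∃ hinv : ∀ (g : G) (x : E), x ∈ Submodule.span ℝ (Set.range β) →
        π g x ∈ Submodule.span ℝ (Set.range β),
      ∃ D : G → (↥(Submodule.span ℝ (Set.range β)) →ₗ[ℝ] E),
        (∀ g g' : G,
          D g ⟨β g', Submodule.subset_span ⟨g', rfl⟩⟩ = α (g * g') - α g - π g (α g')) ∧
        (∀ g h : G,
          D (g * h) = (D g).comp ((π h).restrict fun x hx => hinv h x hx)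
            + (π g).comp (D h)) ∧
        (∀ D' : G → (↥(Submodule.span ℝ (Set.range β)) →ₗ[ℝ] E),
          (∀ g g' : G,
            D' g ⟨β g', Submodule.subset_span ⟨g', rfl⟩⟩ = α (g * g') - α g - π g (α g')) →
          D' = D) := by
  classical
  have hβ1 : β 1 = 0 := by
    have h := hβ 1 1
    rw [mul_one, hπ1] at h
    simpa using h.symm
  have hβmem : ∀ h ∈ H, β h = 0 := by
    intro h hh
    have := hβH 1 h hh
    rwa [one_mul, hβ1] at this
  have hαmem : ∀ h ∈ H, α h = 0 := by
    intro h hh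
    have := hαH 1 h hh
    rwa [one_mul, hα1] at this
  have hinv : ∀ (g : G) (x : E), x ∈ Submodule.span ℝ (Set.range β) →
      π g x ∈ Submodule.span ℝ (Set.range β) := by
    intro g x hx
    induction hx using Submodule.span_induction with
    | mem y hy =>
      obtain ⟨g', rfl⟩ := hy
      have hd : π g (β g') = β (g * g') - β g := by rw [hβ g g']; abel
      rw [hd]
      exact sub_mem (Submodule.subset_span ⟨_, rfl⟩) (Submodule.subset_span ⟨_, rfl⟩)
    | zero => simp
    | add x y _ _ hx hy => rw [map_add]; exact add_mem hx hy
    | smul c x _ hx => rw [map_smul]; exact Submodule.smul_mem _ _ hx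
  refine ⟨hinv, ?_⟩
  set b : {x : G ⧸ H // x ≠ ((1 : G) : G ⧸ H)} → E := fun x =>
    Quotient.liftOn' x.1 β (fun a b hab => by
      have h1 : a⁻¹ * b ∈ H := QuotientGroup.leftRel_apply.mp hab
      have h2 := hβH a (a⁻¹ * b) h1
      rw [mul_inv_cancel_left] at h2
      exact h2.symm) with hbdef
  have hlib : LinearIndependent ℝ b := hli
  have hbout : ∀ x : {x : G ⧸ H // x ≠ ((1 : G) : G ⧸ H)}, ∃ g : G, b x = β g := by
    rintro ⟨q, hq⟩
    induction q using Quotient.inductionOn' with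
    | h g => exact ⟨g, rfl⟩
  have hbval : ∀ (g' : G) (hne : ((g' : G ⧸ H)) ≠ ((1 : G) : G ⧸ H)),
      b ⟨(g' : G ⧸ H), hne⟩ = β g' := fun _ _ => rfl
  have hspan : Submodule.span ℝ (Set.range b) = Submodule.span ℝ (Set.range β) := by
    apply le_antisymm
    · rw [Submodule.span_le]
      rintro _ ⟨x, rfl⟩
      obtain ⟨g, hg⟩ := hbout x
      rw [hg]
      exact Submodule.subset_span ⟨_, rfl⟩
    · rw [Submodule.span_le]
      rintro _ ⟨g', rfl⟩
      by_cases hg' : ((g' : G ⧸ H)) = ((1 : G) : G ⧸ H)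
      · have : g' ∈ H := by
          have h2 := QuotientGroup.eq.mp hg'
          rw [mul_one] at h2
          exact inv_mem_iff.mp h2
        rw [hβmem g' this]
        exact zero_mem _
      · rw [← hbval g' hg']
        exact Submodule.subset_span ⟨_, rfl⟩
  let bas : Module.Basis {x : G ⧸ H // x ≠ ((1 : G) : G ⧸ H)} ℝ
      ↥(Submodule.span ℝ (Set.range β)) :=
    (Module.Basis.span hlib).map (LinearEquiv.ofEq _ _ hspan)
  have hbasval : ∀ x, (bas x : E) = b x := by
    intro x
    simp [bas, Module.Basis.span_apply]
  have hgen : ∀ f₁ f₂ : ↥(Submodule.span ℝ (Set.range β)) →ₗ[ℝ] E,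
      (∀ g' : G, f₁ ⟨β g', Submodule.subset_span ⟨g', rfl⟩⟩
        = f₂ ⟨β g', Submodule.subset_span ⟨g', rfl⟩⟩) → f₁ = f₂ := by
    intro f₁ f₂ hf
    apply bas.ext
    intro x
    obtain ⟨g, hg⟩ := hbout x
    have hx : bas x = ⟨β g, Submodule.subset_span ⟨_, rfl⟩⟩ :=
      Subtype.ext (by rw [hbasval x, hg])
    rw [hx]
    exact hf _
  let D : G → (↥(Submodule.span ℝ (Set.range β)) →ₗ[ℝ] E) := fun g =>
    bas.constr ℝ (fun x => Quotient.liftOn' x.1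
      (fun g' => α (g * g') - α g - π g (α g'))
      (fun a c hac => by
        have h1 : a⁻¹ * c ∈ H := QuotientGroup.leftRel_apply.mp hac
        have e1 : α (g * c) = α (g * a) := by
          have h2 := hαH (g * a) (a⁻¹ * c) h1
          rwa [mul_assoc, mul_inv_cancel_left] at h2
        have e2 : α c = α a := by
          have h2 := hαH a (a⁻¹ * c) h1
          rwa [mul_inv_cancel_left] at h2
        rw [e1, e2]))
  have hD : ∀ g g' : G,
      D g ⟨β g', Submodule.subset_span ⟨g', rfl⟩⟩ = α (g * g') - α g - π g (α g') := by
    intro g g'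
    by_cases hg' : ((g' : G ⧸ H)) = ((1 : G) : G ⧸ H)
    · have hgH : g' ∈ H := by
        have h2 := QuotientGroup.eq.mp hg'
        rw [mul_one] at h2
        exact inv_mem_iff.mp h2
      have h0 : (⟨β g', Submodule.subset_span ⟨g', rfl⟩⟩ :
          ↥(Submodule.span ℝ (Set.range β))) = 0 := Subtype.ext (hβmem g' hgH)
      rw [h0, map_zero, hαH g g' hgH, hαmem g' hgH, map_zero]
      abel
    · have hx : (⟨β g', Submodule.subset_span ⟨g', rfl⟩⟩ :
          ↥(Submodule.span ℝ (Set.range β))) = bas ⟨(g' : G ⧸ H), hg'⟩ :=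
        Subtype.ext (by rw [hbasval]; rfl)
      rw [hx]
      show (bas.constr ℝ _) _ = _
      rw [Module.Basis.constr_basis]
      rfl
  have hsub : ∀ (h g' : G),
      ((π h).restrict fun x hx => hinv h x hx) ⟨β g', Submodule.subset_span ⟨g', rfl⟩⟩
        = (⟨β (h * g'), Submodule.subset_span ⟨_, rfl⟩⟩ :
            ↥(Submodule.span ℝ (Set.range β)))
          - ⟨β h, Submodule.subset_span ⟨_, rfl⟩⟩ := by
    intro h g'
    apply Subtype.ext
    simp only [LinearMap.restrict_apply, AddSubgroupClass.coe_sub]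
    rw [hβ h g']
    abel
  refine ⟨D, hD, ?_, ?_⟩
  · intro g h
    apply hgen
    intro g'
    rw [hD]
    simp only [LinearMap.add_apply, LinearMap.comp_apply]
    rw [hsub, map_sub, hD, hD, hD]
    simp only [map_sub, hπmul, LinearMap.comp_apply, mul_assoc]
    abel
  · intro D' hD'
    funext g
    exact hgen _ _ (fun g' => (hD' g g').trans (hD g g').symm)
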